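/- For each d ≥ 2 there exists a constant c > 0 such that for all y ≥ 0, both (1 − J_∞^d(y))² ≥ c · (2 − 2 J_∞^d(y) − d ((J_∞^d)'(y))²) and (1 + J_∞^d(y))² ≥ c · (2 + 2 J_∞^d(y) − d ((J_∞^d)'(y))²) hold. Equivalently, the infima over y ∈ (0, ∞) of (1 ∓ J_∞^d(y)) / √(2 ∓ 2 J_∞^d(y) − d ((J_∞^d)'(y))²) are both strictly positive. -/

import Mathlib

set_option maxHeartbeats 2000000

open Real

/-- The normalized Bessel function
`J_∞^d(y) = Σ_{j≥0} (−1)^j Γ(d/2)/(j! Γ(j+d/2)) (y/2)^{2j}`. -/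
noncomputable def besselJdim (d : ℕ) (y : ℝ) : ℝ :=
  ∑' j : ℕ, (-1) ^ j * Real.Gamma ((d : ℝ) / 2) /
      ((j.factorial : ℝ) * Real.Gamma ((j : ℝ) + (d : ℝ) / 2)) * (y / 2) ^ (2 * j)

namespace BesselAux

open FormalMultilinearSeries Filter

/-- Coefficients of the power series `g` with `J(y) = g(y²)`. -/
noncomputable def bb (d : ℕ) (j : ℕ) : ℝ :=
  (-1) ^ j * Real.Gamma ((d : ℝ) / 2) /
    (4 ^ j * (j.factorial : ℝ) * Real.Gamma ((j : ℝ) + (d : ℝ) / 2))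

noncomputable def b1 (d : ℕ) (n : ℕ) : ℝ := ((n : ℝ) + 1) * bb d (n + 1)

noncomputable def b2 (d : ℕ) (n : ℕ) : ℝ := ((n : ℝ) + 1) * b1 d (n + 1)

variable {d : ℕ}

lemma hdR (hd : 2 ≤ d) : (2:ℝ) ≤ (d:ℝ) := by exact_mod_cast hd

lemma Gpos (hd : 2 ≤ d) (j : ℕ) : 0 < Real.Gamma ((j : ℝ) + (d : ℝ) / 2) := by
  apply Real.Gamma_pos_of_pos
  have := hdR hd
  positivity

lemma bb_ne (hd : 2 ≤ d) (j : ℕ) : bb d j ≠ 0 := by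
  unfold bb
  have h1 := Gpos hd j
  have h2 : Real.Gamma ((d:ℝ)/2) > 0 := by
    have := Gpos hd 0; simpa using this
  have h3 : (0:ℝ) < (j.factorial : ℝ) := by positivity
  have h4 : (0:ℝ) < (4:ℝ)^j := by positivity
  have h5 : ((-1:ℝ))^j ≠ 0 := by
    rcases Int.even_or_odd j with h|h
    all_goals simp [pow_ne_zero]
  positivity

lemma b1_ne (hd : 2 ≤ d) (n : ℕ) : b1 d n ≠ 0 := by
  unfold b1
  exact mul_ne_zero (by positivity) (bb_ne hd _)

lemma b2_ne (hd : 2 ≤ d) (n : ℕ) : b2 d n ≠ 0 := by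
  unfold b2
  exact mul_ne_zero (by positivity) (b1_ne hd _)

lemma bb_rec (hd : 2 ≤ d) (j : ℕ) :
    bb d (j+1) = -bb d j / (4*((j:ℝ)+1)*((j:ℝ) + (d:ℝ)/2)) := by
  have hG := Gpos hd j
  have hx : ((j:ℝ) + (d:ℝ)/2) ≠ 0 := ne_of_gt (by have := hdR hd; positivity)
  have hGrec : Real.Gamma (((j:ℕ)+1 : ℝ) + (d:ℝ)/2)
      = ((j:ℝ) + (d:ℝ)/2) * Real.Gamma ((j:ℝ) + (d:ℝ)/2) := by
    have := Real.Gamma_add_one hx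
    rw [← this]; ring_nf
  unfold bb
  push_cast
  rw [hGrec]
  have h3 : ((j.factorial : ℝ)) ≠ 0 := by positivity
  have h4 : ((4:ℝ)^j) ≠ 0 := by positivity
  rw [Nat.factorial_succ]
  push_cast
  field_simp
  ring

lemma abs_bb_rec (hd : 2 ≤ d) (j : ℕ) :
    |bb d (j+1)| = |bb d j| / (4*((j:ℝ)+1)*((j:ℝ) + (d:ℝ)/2)) := by
  have hpos : (0:ℝ) < 4*((j:ℝ)+1)*((j:ℝ) + (d:ℝ)/2) := by
    have := hdR hd; positivity
  rw [bb_rec hd j, abs_div, abs_neg, abs_of_pos hpos]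

lemma abs_b1_rec (hd : 2 ≤ d) (n : ℕ) :
    |b1 d (n+1)| = |b1 d n| / (4*((n:ℝ)+1)*(((n:ℝ)+1) + (d:ℝ)/2)) := by
  unfold b1
  rw [abs_mul, abs_mul, abs_bb_rec hd (n+1)]
  have h1 : |((n:ℝ)+1+1)| = (n:ℝ)+1+1 := by rw [abs_of_pos (by positivity)]
  have h2 : |((n:ℝ)+1)| = (n:ℝ)+1 := by rw [abs_of_pos (by positivity)]
  push_cast
  rw [h1, h2]
  have hne : ((n:ℝ)+2) ≠ 0 := by positivity
  field_simp

lemma abs_b2_rec (hd : 2 ≤ d) (n : ℕ) :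
    |b2 d (n+1)| = |b2 d n| / (4*((n:ℝ)+1)*(((n:ℝ)+2) + (d:ℝ)/2)) := by
  unfold b2
  rw [abs_mul, abs_mul, abs_b1_rec hd (n+1)]
  have h1 : |((n:ℝ)+1+1)| = (n:ℝ)+1+1 := by rw [abs_of_pos (by positivity)]
  have h2 : |((n:ℝ)+1)| = (n:ℝ)+1 := by rw [abs_of_pos (by positivity)]
  push_cast
  rw [h1, h2]
  have hne : ((n:ℝ)+2) ≠ 0 := by positivity
  field_simp
  ring

lemma bb_zero (hd : 2 ≤ d) : bb d 0 = 1 := by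
  have h2 : Real.Gamma ((d:ℝ)/2) > 0 := by
    have := Gpos hd 0; simpa using this
  unfold bb
  simp [ne_of_gt h2]

lemma bb_one (hd : 2 ≤ d) : bb d 1 = -1/(2*(d:ℝ)) := by
  have h := bb_rec hd 0
  rw [bb_zero hd] at h
  rw [h]
  push_cast
  have : (d:ℝ) ≠ 0 := by have := hdR hd; positivity
  field_simp
  ring

lemma bb_two (hd : 2 ≤ d) : bb d 2 = 1/(8*(d:ℝ)*((d:ℝ)+2)) := by
  have h := bb_rec hd 1
  rw [bb_one hd] at h
  rw [h]
  push_cast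
  have h0 : (d:ℝ) ≠ 0 := by have := hdR hd; positivity
  have h1 : (d:ℝ)+2 ≠ 0 := by have := hdR hd; positivity
  field_simp
  ring

lemma radius_top (u : ℕ → ℝ) (h0 : ∀ n, u n ≠ 0)
    (hstep : ∀ n, |u (n+1)| * ((n:ℝ)+1) ≤ |u n|) : (ofScalars ℝ u).radius = ⊤ := by
  apply ofScalars_radius_eq_top_of_tendsto ℝ u (Eventually.of_forall h0)
  have h1 : Tendsto (fun n : ℕ => 1/((n:ℝ)+1)) atTop (nhds 0) :=
    tendsto_one_div_add_atTop_nhds_zero_nat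
  apply squeeze_zero (fun n => by positivity) (fun n => ?_) h1
  have hpos : 0 < |u n| := abs_pos.mpr (h0 n)
  rw [Real.norm_eq_abs, Real.norm_eq_abs, div_le_div_iff₀ hpos (by positivity)]
  have := hstep n
  nlinarith [abs_nonneg (u (n+1))]

lemma bb_step (hd : 2 ≤ d) (n : ℕ) : |bb d (n+1)| ≤ |bb d n| / 4 := by
  rw [abs_bb_rec hd n]
  have hD := hdR hd
  apply div_le_div_of_nonneg_left (abs_nonneg _) (by norm_num) ?_ |>.trans_eq rfl
  nlinarith [Nat.cast_nonneg (α := ℝ) n]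

lemma b1_step (hd : 2 ≤ d) (n : ℕ) : |b1 d (n+1)| ≤ |b1 d n| / 4 := by
  rw [abs_b1_rec hd n]
  have hD := hdR hd
  apply div_le_div_of_nonneg_left (abs_nonneg _) (by norm_num) ?_
  nlinarith [Nat.cast_nonneg (α := ℝ) n]

lemma bb_radius (hd : 2 ≤ d) : (ofScalars ℝ (bb d)).radius = ⊤ := by
  apply radius_top _ (bb_ne hd)
  intro n
  rw [abs_bb_rec hd n]
  have hD := hdR hd
  have hb := abs_nonneg (bb d n)
  rw [div_mul_eq_mul_div, div_le_iff₀ (by positivity)]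
  have hcoef : ((n:ℝ)+1) ≤ 4*((n:ℝ)+1)*((n:ℝ)+2+(d:ℝ)/2) := by
    nlinarith [Nat.cast_nonneg (α := ℝ) n]
  nlinarith [mul_le_mul_of_nonneg_left hcoef hb, Nat.cast_nonneg (α := ℝ) n, hb]

lemma b1_radius (hd : 2 ≤ d) : (ofScalars ℝ (b1 d)).radius = ⊤ := by
  apply radius_top _ (b1_ne hd)
  intro n
  rw [abs_b1_rec hd n]
  have hD := hdR hd
  have hb := abs_nonneg (b1 d n)
  rw [div_mul_eq_mul_div, div_le_iff₀ (by positivity)]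
  have hcoef : ((n:ℝ)+1) ≤ 4*((n:ℝ)+1)*((n:ℝ)+2+(d:ℝ)/2) := by
    nlinarith [Nat.cast_nonneg (α := ℝ) n]
  nlinarith [mul_le_mul_of_nonneg_left hcoef hb, Nat.cast_nonneg (α := ℝ) n, hb]

lemma b2_radius (hd : 2 ≤ d) : (ofScalars ℝ (b2 d)).radius = ⊤ := by
  apply radius_top _ (b2_ne hd)
  intro n
  rw [abs_b2_rec hd n]
  have hD := hdR hd
  have hb := abs_nonneg (b2 d n)
  rw [div_mul_eq_mul_div, div_le_iff₀ (by positivity)]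
  have hcoef : ((n:ℝ)+1) ≤ 4*((n:ℝ)+1)*((n:ℝ)+2+(d:ℝ)/2) := by
    nlinarith [Nat.cast_nonneg (α := ℝ) n]
  nlinarith [mul_le_mul_of_nonneg_left hcoef hb, Nat.cast_nonneg (α := ℝ) n, hb]

noncomputable def Jg (d : ℕ) : ℝ → ℝ := ofScalarsSum (bb d)
noncomputable def Jg1 (d : ℕ) : ℝ → ℝ := ofScalarsSum (b1 d)
noncomputable def Jg2 (d : ℕ) : ℝ → ℝ := ofScalarsSum (b2 d)

lemma hasDerivAt_ofScalarsSum (u u' : ℕ → ℝ)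
    (hu : (ofScalars ℝ u).radius = ⊤) (hu' : (ofScalars ℝ u').radius = ⊤)
    (huu' : ∀ n, u' n = ((n : ℝ) + 1) * u (n + 1)) (x : ℝ) :
    HasDerivAt (ofScalarsSum u) (ofScalarsSum u' x) x := by
  set p := ofScalars ℝ u with hp
  set q := ofScalars ℝ u' with hq
  have hrad : (0 : ENNReal) < p.radius := by rw [hu]; exact ENNReal.zero_lt_top
  have hmem : ∀ y : ℝ, y ∈ Metric.eball (0:ℝ) p.radius := fun y => by
    rw [hu]; exact EMetric.mem_ball.mpr (edist_lt_top _ _)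
  have hmem' : ∀ y : ℝ, y ∈ EMetric.ball (0:ℝ) q.radius := fun y => by
    rw [hu']; exact EMetric.mem_ball.mpr (edist_lt_top _ _)
  have hball : HasFPowerSeriesOnBall p.sum p 0 p.radius := p.hasFPowerSeriesOnBall hrad
  have hdiff : DifferentiableAt ℝ p.sum x :=
    (hball.analyticAt_of_mem (by simpa using hmem x)).differentiableAt
  have hq' : HasSum (fun n => u' n • x ^ n) (ofScalarsSum u' x) := by
    have := q.hasSum (hmem' x)
    simpa only [hq, ofScalarsSum, ofScalars_apply_eq] using this
  have hkey : deriv p.sum x = ofScalarsSum u' x := by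
    rcases eq_or_ne x 0 with rfl | hx
    · have h0 : deriv p.sum 0 = p 1 fun _ => (1:ℝ) := hball.hasFPowerSeriesAt.deriv
      rw [h0]
      have h1 : (p 1 fun _ => (1:ℝ)) = u 1 := by
        rw [hp, ofScalars_apply_eq]; simp
      have h2 : ofScalarsSum u' 0 = u' 0 := by
        rw [ofScalars_sum_eq]
        rw [tsum_eq_single 0 (fun n hn => by simp [zero_pow hn])]
        simp
      rw [h1, h2, huu' 0]; norm_num
    · have hs0 := hball.fderiv.hasSum (hmem x)
      have hs1 : HasSum (fun n => (p.derivSeries n fun _ => x) x)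
          (fderiv ℝ p.sum (0 + x) x) := by
        have h2 := (ContinuousLinearMap.apply ℝ ℝ x).hasSum hs0
        simpa using h2
      have hterm : (fun n => (p.derivSeries n fun _ => x) x)
          = fun n => x * (u' n • x ^ n) := by
        funext n
        rw [p.derivSeries_apply_diag n x, hp, ofScalars_apply_eq, huu' n,
          smul_eq_mul, smul_eq_mul, nsmul_eq_mul]
        push_cast
        ring
      rw [hterm] at hs1
      have hs2 : HasSum (fun n => x * (u' n • x ^ n)) (x * ofScalarsSum u' x) :=
        hq'.mul_left x
      have heq : fderiv ℝ p.sum (0 + x) x = x * ofScalarsSum u' x := hs1.unique hs2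
      rw [zero_add] at heq
      have heval : fderiv ℝ p.sum x x = x * deriv p.sum x := by
        have : (x : ℝ) = x • (1:ℝ) := by simp
        rw [this, map_smul, fderiv_apply_one_eq_deriv]; simp [smul_eq_mul]
      rw [heval] at heq
      exact mul_left_cancel₀ hx heq
  have : HasDerivAt p.sum (deriv p.sum x) x := hdiff.hasDerivAt
  rw [hkey] at this
  exact this

lemma hasDerivAt_Jg (hd : 2 ≤ d) (x : ℝ) : HasDerivAt (Jg d) (Jg1 d x) x :=
  hasDerivAt_ofScalarsSum (bb d) (b1 d) (bb_radius hd) (b1_radius hd) (fun _ => rfl) x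

lemma hasDerivAt_Jg1 (hd : 2 ≤ d) (x : ℝ) : HasDerivAt (Jg1 d) (Jg2 d x) x :=
  hasDerivAt_ofScalarsSum (b1 d) (b2 d) (b1_radius hd) (b2_radius hd) (fun _ => rfl) x

lemma hasSum_Jg (hd : 2 ≤ d) (x : ℝ) : HasSum (fun n => bb d n * x ^ n) (Jg d x) := by
  have hm : x ∈ EMetric.ball (0:ℝ) (ofScalars ℝ (bb d)).radius := by
    rw [bb_radius hd]; exact EMetric.mem_ball.mpr (edist_lt_top _ _)
  have := (ofScalars ℝ (bb d)).hasSum hm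
  simpa only [Jg, ofScalarsSum, ofScalars_apply_eq, smul_eq_mul] using this

lemma hasSum_Jg1 (hd : 2 ≤ d) (x : ℝ) : HasSum (fun n => b1 d n * x ^ n) (Jg1 d x) := by
  have hm : x ∈ EMetric.ball (0:ℝ) (ofScalars ℝ (b1 d)).radius := by
    rw [b1_radius hd]; exact EMetric.mem_ball.mpr (edist_lt_top _ _)
  have := (ofScalars ℝ (b1 d)).hasSum hm
  simpa only [Jg1, ofScalarsSum, ofScalars_apply_eq, smul_eq_mul] using this

lemma hasSum_Jg2 (hd : 2 ≤ d) (x : ℝ) : HasSum (fun n => b2 d n * x ^ n) (Jg2 d x) := by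
  have hm : x ∈ EMetric.ball (0:ℝ) (ofScalars ℝ (b2 d)).radius := by
    rw [b2_radius hd]; exact EMetric.mem_ball.mpr (edist_lt_top _ _)
  have := (ofScalars ℝ (b2 d)).hasSum hm
  simpa only [Jg2, ofScalarsSum, ofScalars_apply_eq, smul_eq_mul] using this

/-- The Bessel ODE in terms of `g`. -/
lemma ode (hd : 2 ≤ d) (x : ℝ) : Jg d x + 2*(d:ℝ)*Jg1 d x + 4*x*Jg2 d x = 0 := by
  have hs0 := hasSum_Jg hd x
  have hs1 := (hasSum_Jg1 hd x).mul_left (2*(d:ℝ))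
  have hs2 := (hasSum_Jg2 hd x).mul_left (4*x)
  set w : ℕ → ℝ := fun k => 4*(k:ℝ)*(b1 d k)*x^k with hw
  have hsh : (fun n => 4*x*(b2 d n * x^n)) = fun n => w (n+1) := by
    funext n
    show 4*x*(b2 d n * x^n) = 4*(((n+1 : ℕ)):ℝ)*(b1 d (n+1))*x^(n+1)
    unfold b2
    push_cast
    ring
  rw [hsh] at hs2
  have hw0 : HasSum w (4*x*Jg2 d x) := by
    refine (hasSum_nat_add_iff' (g := 4*x*Jg2 d x) 1).mp ?_
    have hr : (4*x*Jg2 d x) - ∑ i ∈ Finset.range 1, w i = 4*x*Jg2 d x := by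
      simp [hw]
    rw [hr]
    exact hs2
  have htot := (hs0.add hs1).add hw0
  have hzero : (fun n => (bb d n * x^n + 2*(d:ℝ)*(b1 d n * x^n)) + w n)
      = fun _ => (0:ℝ) := by
    funext n
    show bb d n * x^n + 2*(d:ℝ)*(b1 d n * x^n) + 4*((n:ℝ))*(b1 d n)*x^n = 0
    have hcoef : bb d n + 2*(d:ℝ)*(b1 d n) + 4*(n:ℝ)*(b1 d n) = 0 := by
      unfold b1
      rw [bb_rec hd n]
      have hne : ((n:ℝ) + (d:ℝ)/2) ≠ 0 := ne_of_gt (by have := hdR hd; positivity)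
      have hne2 : ((n:ℝ) + 1) ≠ 0 := by positivity
      field_simp
      ring
    linear_combination x^n * hcoef
  rw [hzero] at htot
  have h0 : HasSum (fun _ : ℕ => (0:ℝ)) 0 := hasSum_zero
  exact (h0.unique htot).symm

/-- Geometric tail bound. -/
lemma tail_bound {u : ℕ → ℝ} {S : ℝ} (h : HasSum u S)
    (hstep : ∀ n, |u (n+1)| ≤ |u n|/4) : |S - u 0| ≤ (4/3) * (|u 1|) := by
  have h1 : HasSum (fun n => u (n+1)) (S - u 0) := by
    have := (hasSum_nat_add_iff' (f := u) 1).mpr h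
    simpa using this
  have hb : ∀ n, |u (n+1)| ≤ |u 1| * (1/4)^n := by
    intro n
    induction n with
    | zero => simp
    | succ k ih =>
      calc |u (k+2)| ≤ |u (k+1)|/4 := hstep (k+1)
        _ ≤ (|u 1| * (1/4)^k)/4 := by linarith
        _ = |u 1| * (1/4)^(k+1) := by ring
  have hgeo : HasSum (fun n : ℕ => |u 1| * (1/4)^n) (|u 1| * (4/3)) := by
    have := (hasSum_geometric_of_lt_one (r := (1/4:ℝ)) (by norm_num) (by norm_num)).mul_left (|u 1|)
    rw [show (4/3:ℝ) = (1 - 1/4)⁻¹ by norm_num]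
    exact this
  have := tsum_of_norm_bounded hgeo (fun n => by
    rw [Real.norm_eq_abs]; exact hb n)
  rw [h1.tsum_eq] at this
  rw [Real.norm_eq_abs] at this
  linarith [this]

lemma tail_x {v : ℕ → ℝ} {S x : ℝ} (hx0 : 0 ≤ x) (hx1 : x ≤ 1)
    (h : HasSum (fun n => v n * x^n) S) (hst : ∀ n, |v (n+1)| ≤ |v n|/4) :
    |S - v 0| ≤ (4/3) * (|v 1|) * x := by
  have hstep : ∀ n, |v (n+1) * x^(n+1)| ≤ |v n * x^n|/4 := by
    intro n
    rw [abs_mul, abs_mul]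
    have hxp : |x^(n+1)| ≤ |x^n| := by
      rw [abs_pow, abs_pow, abs_of_nonneg hx0]
      exact pow_le_pow_of_le_one hx0 hx1 (by omega)
    have := hst n
    have h1 : |v (n+1)| * |x^(n+1)| ≤ (|v n|/4) * |x^n| :=
      mul_le_mul this hxp (abs_nonneg _) (by positivity)
    linarith
  have := tail_bound h hstep
  simp only [pow_zero, mul_one, pow_one] at this
  rw [abs_mul, abs_of_nonneg hx0] at this
  linarith [this]

lemma besselJdim_eq (hd : 2 ≤ d) : besselJdim d = fun y => Jg d (y^2) := by
  funext y
  unfold besselJdim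
  have h := ((hasSum_Jg hd (y^2)).tsum_eq).symm
  rw [show Jg d (y^2) = ∑' n, bb d n * (y^2)^n from h]
  apply tsum_congr
  intro j
  unfold bb
  rw [pow_mul]
  have h1 : (y/2)^2 = y^2/4 := by ring
  rw [h1, div_pow]
  ring

lemma b1_zero (hd : 2 ≤ d) : b1 d 0 = -1/(2*(d:ℝ)) := by
  unfold b1
  rw [bb_one hd]
  norm_num

lemma b1_one (hd : 2 ≤ d) : b1 d 1 = 1/(4*(d:ℝ)*((d:ℝ)+2)) := by
  unfold b1
  rw [bb_two hd]
  have h0 : (d:ℝ) ≠ 0 := by have := hdR hd; positivity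
  have h1 : (d:ℝ)+2 ≠ 0 := by have := hdR hd; positivity
  push_cast
  field_simp
  ring

lemma Jg_bound (hd : 2 ≤ d) {x : ℝ} (hx0 : 0 ≤ x) (hx1 : x ≤ 1) :
    |Jg d x - 1 + x/(2*(d:ℝ))| ≤ x^2/(6*(d:ℝ)*((d:ℝ)+2)) := by
  have hD := hdR hd
  have hS : HasSum (fun n => (bb d (n+1) * x) * x^n) (Jg d x - 1) := by
    have h0 := (hasSum_nat_add_iff' (g := Jg d x) 1).mpr (hasSum_Jg hd x)
    have hr : Jg d x - ∑ i ∈ Finset.range 1, bb d i * x^i = Jg d x - 1 := by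
      simp [bb_zero hd]
    rw [hr] at h0
    have hf : (fun n => (bb d (n+1) * x) * x^n) = fun n => bb d (n+1) * x^(n+1) := by
      funext n; ring
    rw [hf]; exact h0
  have hst : ∀ n, |bb d (n+1+1) * x| ≤ |bb d (n+1) * x|/4 := fun n => by
    rw [abs_mul, abs_mul]
    have h1 := bb_step hd (n+1)
    have h2 := abs_nonneg x
    nlinarith [abs_nonneg (bb d (n+1+1))]
  have htail := tail_x hx0 hx1 hS hst
  have hv0 : bb d (0+1) * x = -1/(2*(d:ℝ)) * x := by rw [show (0+1 : ℕ) = 1 from rfl, bb_one hd]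
  have hv1 : bb d (1+1) * x = 1/(8*(d:ℝ)*((d:ℝ)+2)) * x := by
    rw [show (1+1 : ℕ) = 2 from rfl, bb_two hd]
  rw [hv0, hv1] at htail
  have he1 : Jg d x - 1 - (-1/(2*(d:ℝ)) * x) = Jg d x - 1 + x/(2*(d:ℝ)) := by ring
  rw [he1] at htail
  have he2 : |1/(8*(d:ℝ)*((d:ℝ)+2)) * x| = 1/(8*(d:ℝ)*((d:ℝ)+2)) * x := by
    rw [abs_of_nonneg (by positivity)]
  rw [he2] at htail
  have he3 : (4/3) * (1/(8*(d:ℝ)*((d:ℝ)+2)) * x) * x = x^2/(6*(d:ℝ)*((d:ℝ)+2)) := by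
    field_simp
    ring
  rw [he3] at htail
  exact htail

lemma Jg1_bound (hd : 2 ≤ d) {x : ℝ} (hx0 : 0 ≤ x) (hx1 : x ≤ 1) :
    |Jg1 d x + 1/(2*(d:ℝ))| ≤ x/(3*(d:ℝ)*((d:ℝ)+2)) := by
  have hD := hdR hd
  have htail := tail_x hx0 hx1 (hasSum_Jg1 hd x) (b1_step hd)
  rw [b1_zero hd, b1_one hd] at htail
  have he1 : Jg1 d x - (-1/(2*(d:ℝ))) = Jg1 d x + 1/(2*(d:ℝ)) := by ring
  rw [he1] at htail
  have he2 : |1/(4*(d:ℝ)*((d:ℝ)+2))| = 1/(4*(d:ℝ)*((d:ℝ)+2)) := by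
    rw [abs_of_nonneg (by positivity)]
  rw [he2] at htail
  have he3 : (4/3) * (1/(4*(d:ℝ)*((d:ℝ)+2))) * x = x/(3*(d:ℝ)*((d:ℝ)+2)) := by
    field_simp
  rw [he3] at htail
  exact htail



noncomputable def Efun (d : ℕ) (t : ℝ) : ℝ := (Jg d (t^2))^2 + (2*t*Jg1 d (t^2))^2

lemma hasDerivAt_sq (t : ℝ) : HasDerivAt (fun s : ℝ => s^2) (2*t) t := by
  simpa using hasDerivAt_pow 2 t

lemma Efun_hasDeriv (hd : 2 ≤ d) (t : ℝ) : HasDerivAt (Efun d)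
    (4*t*(Jg1 d (t^2))*(Jg d (t^2) + 2*Jg1 d (t^2) + 4*t^2*Jg2 d (t^2))) t := by
  have h1 : HasDerivAt (fun s => Jg d (s^2)) (Jg1 d (t^2)*(2*t)) t :=
    (hasDerivAt_Jg hd (t^2)).comp t (hasDerivAt_sq t)
  have h2 : HasDerivAt (fun s => 2*s*Jg1 d (s^2))
      (2*Jg1 d (t^2) + 2*t*(Jg2 d (t^2)*(2*t))) t := by
    have ha : HasDerivAt (fun s : ℝ => 2*s) 2 t := by
      simpa using (hasDerivAt_id t).const_mul 2
    have hb : HasDerivAt (fun s => Jg1 d (s^2)) (Jg2 d (t^2)*(2*t)) t :=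
      (hasDerivAt_Jg1 hd (t^2)).comp t (hasDerivAt_sq t)
    exact ha.mul hb
  have h3 := (h1.pow 2).add (h2.pow 2)
  exact h3.congr_deriv (by push_cast; ring)

lemma Efun_anti (hd : 2 ≤ d) : AntitoneOn (Efun d) (Set.Ici 1) := by
  have hD := hdR hd
  apply antitoneOn_of_deriv_nonpos (convex_Ici 1)
  · intro t _
    exact ((Efun_hasDeriv hd t).continuousAt).continuousWithinAt
  · intro t ht
    exact (Efun_hasDeriv hd t).differentiableAt.differentiableWithinAt
  · intro t ht
    rw [interior_Ici] at ht
    have ht0 : (0:ℝ) ≤ t := by linarith [Set.mem_Ioi.mp ht]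
    rw [(Efun_hasDeriv hd t).deriv]
    have hode := ode hd (t^2)
    have hsub : Jg d (t^2) + 2*Jg1 d (t^2) + 4*t^2*Jg2 d (t^2)
        = (2 - 2*(d:ℝ))*Jg1 d (t^2) := by
      have ht2 : 4*(t^2)*Jg2 d (t^2) = 4*t^2*Jg2 d (t^2) := by ring
      linarith [hode]
    rw [hsub]
    nlinarith [mul_nonneg ht0 (sq_nonneg (Jg1 d (t^2)))]

lemma Efun_one (hd : 2 ≤ d) : Efun d 1 ≤ 1 - 1/(8*(d:ℝ)) := by
  have hD := hdR hd
  have hD0 : (0:ℝ) < d := by linarith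
  set u : ℝ := 1/(2*(d:ℝ)) with hu_def
  have hu0 : 0 < u := by positivity
  have hu4 : u ≤ 1/4 := by
    rw [hu_def, div_le_div_iff₀ (by positivity) (by norm_num)]
    linarith
  set β : ℝ := 1/(6*(d:ℝ)*((d:ℝ)+2)) with hβ_def
  have hβ0 : 0 < β := by positivity
  have hβu : β ≤ u/12 := by
    have h24 : u/12 = 1/(24*(d:ℝ)) := by rw [hu_def]; ring
    rw [hβ_def, h24]
    apply one_div_le_one_div_of_le (by positivity)
    nlinarith
  have h1 := Jg_bound hd (x := 1) (by norm_num) (le_refl 1)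
  have h2 := Jg1_bound hd (x := 1) (by norm_num) (le_refl 1)
  rw [show ((1:ℝ)^2 = 1) from by norm_num] at h1
  obtain ⟨h1a, h1b⟩ := abs_le.mp h1
  obtain ⟨h2a, h2b⟩ := abs_le.mp h2
  have hβ_eq : (1:ℝ)/(6*(d:ℝ)*((d:ℝ)+2)) = β := by rw [hβ_def]
  have hβ2_eq : (1:ℝ)/(3*(d:ℝ)*((d:ℝ)+2)) = 2*β := by
    rw [hβ_def]; field_simp; ring
  have hu_eq : 1/(2*(d:ℝ)) = u := by rw [hu_def]
  rw [hβ_eq, hu_eq] at h1a h1b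
  rw [hβ2_eq, hu_eq] at h2a h2b
  have hEval : Efun d 1 = (Jg d 1)^2 + (2*Jg1 d 1)^2 := by
    unfold Efun; norm_num
  rw [hEval]
  have hu8 : 1/(8*(d:ℝ)) = u/4 := by rw [hu_def]; ring
  rw [hu8]
  set G := Jg d 1
  set H := Jg1 d 1
  have hGa : G ≤ 1 - (11/12)*u := by nlinarith [hβu]
  have hG0 : 0 ≤ G := by nlinarith [hβu, hu4]
  have hHsq : H^2 ≤ ((7/6)*u)^2 := by nlinarith [hβu, hu0]
  have hGsq : G^2 ≤ (1 - (11/12)*u)^2 := by nlinarith [hGa, hG0]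
  nlinarith [hGsq, hHsq, hu0, hu4, mul_nonneg hu0.le (by linarith : (0:ℝ) ≤ 1/4 - u)]

lemma Jg_far (hd : 2 ≤ d) (z : ℝ) (hz : 1 ≤ z) : |Jg d (z^2)| ≤ 1 - 1/(16*(d:ℝ)) := by
  have hD := hdR hd
  have hD0 : (0:ℝ) < d := by linarith
  have hu0 : (0:ℝ) < 1/(16*(d:ℝ)) := by positivity
  have hu4 : 1/(16*(d:ℝ)) ≤ 1/32 := by
    rw [div_le_div_iff₀ (by positivity) (by norm_num)]
    linarith
  have hEz : Efun d z ≤ Efun d 1 :=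
    Efun_anti hd (Set.mem_Ici.mpr le_rfl) (Set.mem_Ici.mpr hz) hz
  have h1 : (Jg d (z^2))^2 ≤ Efun d z := by
    unfold Efun
    nlinarith [sq_nonneg (2*z*Jg1 d (z^2))]
  have hE1 := Efun_one hd
  have h2 : (Jg d (z^2))^2 ≤ (1 - 1/(16*(d:ℝ)))^2 := by
    have hsq : 1 - 1/(8*(d:ℝ)) ≤ (1 - 1/(16*(d:ℝ)))^2 := by
      have : (1 - 1/(16*(d:ℝ)))^2 = 1 - 2*(1/(16*(d:ℝ))) + (1/(16*(d:ℝ)))^2 := by ring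
      rw [this]
      have h8 : 1/(8*(d:ℝ)) = 2*(1/(16*(d:ℝ))) := by ring
      nlinarith [sq_nonneg (1/(16*(d:ℝ)))]
    linarith
  exact abs_le_of_sq_le_sq h2 (by linarith)

end BesselAux

open BesselAux in
/-- For each `d ≥ 2` there is `c > 0` such that for all `y ≥ 0`,
`(1 − J_∞^d(y))² ≥ c(2 − 2J_∞^d(y) − d((J_∞^d)'(y))²)` and
`(1 + J_∞^d(y))² ≥ c(2 + 2J_∞^d(y) − d((J_∞^d)'(y))²)`. -/
theorem besselJdim_ratio_infima_pos (d : ℕ) (hd : 2 ≤ d) :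
    ∃ c : ℝ, 0 < c ∧ ∀ y : ℝ, 0 ≤ y →
      (1 - besselJdim d y) ^ 2 ≥
        c * (2 - 2 * besselJdim d y - d * (deriv (besselJdim d) y) ^ 2) ∧
      (1 + besselJdim d y) ^ 2 ≥
        c * (2 + 2 * besselJdim d y - d * (deriv (besselJdim d) y) ^ 2) := by
  have hD := hdR hd
  have hD0 : (0:ℝ) < d := by linarith
  set u : ℝ := 1/(2*(d:ℝ)) with hu_def
  have hu0 : 0 < u := by positivity
  have huD : 2*(d:ℝ)*u = 1 := by rw [hu_def]; field_simp
  have hu4 : u ≤ 1/4 := by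
    rw [hu_def, div_le_div_iff₀ (by positivity) (by norm_num)]
    linarith
  set β : ℝ := 1/(6*(d:ℝ)*((d:ℝ)+2)) with hβ_def
  have hβ0 : 0 < β := by positivity
  have hβu : β ≤ u/12 := by
    have h24 : u/12 = 1/(24*(d:ℝ)) := by rw [hu_def]; ring
    rw [hβ_def, h24]
    apply one_div_le_one_div_of_le (by positivity)
    nlinarith
  refine ⟨u/16, by positivity, ?_⟩
  have hbes := besselJdim_eq (d := d) hd
  have hJd : ∀ t : ℝ, HasDerivAt (besselJdim d) (Jg1 d (t^2) * (2*t)) t := fun t => by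
    rw [hbes]; exact (hasDerivAt_Jg hd (t^2)).comp t (hasDerivAt_sq t)
  have hderiv : ∀ t : ℝ, deriv (besselJdim d) t = 2*t*Jg1 d (t^2) := fun t => by
    rw [(hJd t).deriv]; ring
  intro y hy
  have hbesy : besselJdim d y = Jg d (y^2) := by rw [hbes]
  rw [hbesy, hderiv y]
  rcases le_or_gt y 1 with hy1 | hy1
  · -- small y
    have hx0 : (0:ℝ) ≤ y^2 := sq_nonneg y
    have hx1 : y^2 ≤ 1 := by nlinarith
    have hR := Jg_bound hd hx0 hx1
    have hR1 := Jg1_bound hd hx0 hx1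
    have hβ_eq : (y^2)^2/(6*(d:ℝ)*((d:ℝ)+2)) = β*(y^2)^2 := by rw [hβ_def]; ring
    have hβ2_eq : (y^2)/(3*(d:ℝ)*((d:ℝ)+2)) = 2*β*y^2 := by
      rw [hβ_def]; field_simp; ring
    have hu_eq : (y^2)/(2*(d:ℝ)) = u*y^2 := by rw [hu_def]; ring
    rw [hβ_eq, hu_eq] at hR
    rw [hβ2_eq] at hR1
    have hu_eq2 : 1/(2*(d:ℝ)) = u := by rw [hu_def]
    rw [hu_eq2] at hR1
    set x := y^2 with hx_def
    set G := Jg d x with hG_def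
    set H := Jg1 d x with hH_def
    obtain ⟨hRa, hRb⟩ := abs_le.mp hR
    obtain ⟨hR1a, hR1b⟩ := abs_le.mp hR1
    have h4 : (d:ℝ)*(2*y*H)^2 = 4*(d:ℝ)*x*H^2 := by rw [hx_def]; ring
    have hx2 : x^2 ≤ x := by
      rw [hx_def]; nlinarith
    constructor
    · -- minus case
      rw [h4]
      have hid : 2 - 2*G - 4*(d:ℝ)*x*H^2
          = -2*(G - 1 + u*x) + 4*(x*(H + u)) - 4*((d:ℝ)*x*(H + u)^2) := by
        linear_combination (4*x*H + 2*u*x) * huD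
      have hp1 : x*(H + u) ≤ 2*β*x^2 := by
        nlinarith [mul_le_mul_of_nonneg_left hR1b hx0]
      have hp2 : 0 ≤ (d:ℝ)*x*(H+u)^2 := by positivity
      have hRHS : 2 - 2*G - 4*(d:ℝ)*x*H^2 ≤ 10*β*x^2 := by
        rw [hid]; linarith [hRa, hp1, hp2]
      have hLHS1 : (11/12)*(u*x) ≤ 1 - G := by
        nlinarith [mul_le_mul_of_nonneg_right hβu (sq_nonneg x),
          mul_le_mul_of_nonneg_left hx2 (by positivity : (0:ℝ) ≤ u/12), hRb]
      have hLHS : ((11/12)*(u*x))^2 ≤ (1-G)^2 := by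
        nlinarith [hLHS1, mul_nonneg hu0.le hx0]
      have hb2 : β*x^2 ≤ (u/12)*x^2 :=
        mul_le_mul_of_nonneg_right hβu (sq_nonneg x)
      have hcomb : (u/16) * (10*β*x^2) ≤ ((11/12)*(u*x))^2 := by
        nlinarith [mul_le_mul_of_nonneg_left hb2 (by positivity : (0:ℝ) ≤ 10*(u/16)),
          mul_nonneg hu0.le (sq_nonneg x), hu0]
      have hstep2 : (u/16) * (2 - 2*G - 4*(d:ℝ)*x*H^2) ≤ (u/16) * (10*β*x^2) :=
        mul_le_mul_of_nonneg_left hRHS (by positivity)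
      linarith [hstep2, hcomb, hLHS]
    · -- plus case
      rw [h4]
      have hux : u*x ≤ u := by nlinarith
      have hβx : β*x^2 ≤ β := by nlinarith [hx2, hx1]
      have hG0 : 0 ≤ G := by nlinarith [hβu, hu4]
      have h6 : 0 ≤ 1 + G - u/8 := by linarith
      have hdterm : 0 ≤ 4*(d:ℝ)*x*H^2 := by positivity
      nlinarith [mul_nonneg (by linarith : (0:ℝ) ≤ 1+G) h6,
        mul_nonneg (by positivity : (0:ℝ) ≤ u/16) hdterm]
  · -- large y
    have hzabs := Jg_far hd y hy1.le
    have hu16 : 1/(16*(d:ℝ)) = u/8 := by rw [hu_def]; ring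
    rw [hu16] at hzabs
    set G := Jg d (y^2) with hG_def
    set H := Jg1 d (y^2) with hH_def
    obtain ⟨hza, hzb⟩ := abs_le.mp hzabs
    have hdterm : 0 ≤ (d:ℝ)*(2*y*H)^2 := by positivity
    constructor
    · have h6 : 0 ≤ 1 - G - u/8 := by linarith
      have h7 : 0 ≤ 1 - G := by linarith
      nlinarith [mul_nonneg h7 h6, mul_nonneg (by positivity : (0:ℝ) ≤ u/16) hdterm]
    · have h6 : 0 ≤ 1 + G - u/8 := by linarith
      have h7 : 0 ≤ 1 + G := by linarith
      nlinarith [mul_nonneg h7 h6, mul_nonneg (by positivity : (0:ℝ) ≤ u/16) hdterm]
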